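/- Every propositional Horn formula f with at most ternary clauses over variables p_1,...,p_m is satisfiable if and only if the conjunction φ_f of the following temporal formulas is satisfiable at time 0 over (ℤ,<): p for each unit clause p; p → ⊥ for each clause ¬p; p → q for each clause p → q; and for each clause p ∧ q → r (with fresh variable c for that clause) the formulas c, p → □F c, q → □P c, and □* c → r, where □F, □P are strict future/past 'always' operators and □* c means c holds at all integers. -/

import Mathlib

/-- Horn clauses with at most three literals: `p`, `¬p`, `p → q`, `p ∧ q → r`. -/
inductive HClause (m : ℕ) where
  | pos : Fin m → HClause m
  | neg : Fin m → HClause m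
  | imp : Fin m → Fin m → HClause m
  | tern : Fin m → Fin m → Fin m → HClause m

/-- Propositional evaluation of a Horn clause under an assignment. -/
def evalC {m : ℕ} (σ : Fin m → Bool) : HClause m → Prop
  | .pos p => σ p = true
  | .neg p => σ p = false
  | .imp p q => σ p = true → σ q = true
  | .tern p q r => σ p = true → σ q = true → σ r = true

/-- The temporal translation of the `i`-th clause (with fresh variable `Sum.inr i` for
a ternary clause): `p`; `p → ⊥`; `p → q`; and for `p ∧ q → r` the conjunction
`c ∧ (p → □F c) ∧ (q → □P c) ∧ (□* c → r)`, all asserted at time 0. -/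
def tempC {m : ℕ} (len : ℕ) (M : ℤ → (Fin m ⊕ Fin len) → Bool) (i : Fin len) :
    HClause m → Prop
  | .pos p => M 0 (Sum.inl p) = true
  | .neg p => M 0 (Sum.inl p) = false
  | .imp p q => M 0 (Sum.inl p) = true → M 0 (Sum.inl q) = true
  | .tern p q r =>
      M 0 (Sum.inr i) = true ∧
      (M 0 (Sum.inl p) = true → ∀ k : ℤ, 0 < k → M k (Sum.inr i) = true) ∧
      (M 0 (Sum.inl q) = true → ∀ k : ℤ, k < 0 → M k (Sum.inr i) = true) ∧
      ((∀ k : ℤ, M k (Sum.inr i) = true) → M 0 (Sum.inl r) = true)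

/-- A propositional Horn formula with at most ternary clauses is satisfiable iff its
temporal translation `φ_f` is satisfiable at time 0 over `(ℤ,<)`. -/
def hAux {m : ℕ} (σ : Fin m → Bool) : HClause m → ℤ → Bool
  | .tern p q _, k => if k = 0 then true else if 0 < k then σ p else σ q
  | _, _ => true

theorem stmt8 (m : ℕ) (f : List (HClause m)) :
    (∃ σ : Fin m → Bool, ∀ C ∈ f, evalC σ C) ↔
      (∃ M : ℤ → (Fin m ⊕ Fin f.length) → Bool,
        ∀ i : Fin f.length, tempC f.length M i (f.get i)) := by
  constructor
  · rintro ⟨σ, hσ⟩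
    refine ⟨fun k v => match v with
      | Sum.inl p => σ p
      | Sum.inr i => hAux σ (f.get i) k, fun i => ?_⟩
    have hC := hσ (f.get i) (List.get_mem f i)
    rcases h : f.get i with p | p | ⟨p, q⟩ | ⟨p, q, r⟩ <;> rw [h] at hC
    · exact hC
    · exact hC
    · exact hC
    · refine ⟨?_, ?_, ?_, ?_⟩
      · show hAux σ (f.get i) 0 = true
        rw [h]; simp [hAux]
      · intro hp k hk
        show hAux σ (f.get i) k = true
        rw [h]
        simp [hAux, hk, ne_of_gt hk]
        exact hp
      · intro hq k hk
        show hAux σ (f.get i) k = true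
        rw [h]
        simp [hAux, hk, ne_of_lt hk, not_lt.mpr hk.le]
        exact hq
      · intro hall
        have h1 : hAux σ (f.get i) 1 = true := hall 1
        have h2 : hAux σ (f.get i) (-1) = true := hall (-1)
        rw [h] at h1 h2
        simp [hAux] at h1 h2
        show σ r = true
        exact hC h1 h2
  · rintro ⟨M, hM⟩
    refine ⟨fun p => M 0 (Sum.inl p), fun C hC => ?_⟩
    obtain ⟨i, hi⟩ := List.get_of_mem hC
    have hT := hM i
    rw [hi] at hT
    cases C with
    | pos p => exact hT
    | neg p => exact hT
    | imp p q => exact hT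
    | tern p q r =>
      obtain ⟨h0, hF, hP, hR⟩ := hT
      intro hp hq
      refine hR fun k => ?_
      rcases lt_trichotomy k 0 with hk | hk | hk
      · exact hP hq k hk
      · rw [hk]; exact h0
      · exact hF hp k hk
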